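/- Up to isomorphism, C₅ is the unique doubly saturated R(3,3)-good graph. -/

import Mathlib

/-- The cyclic distance ‖x‖ = min(x mod n, n − (x mod n)) for x ∈ ℤ/nℤ. -/
def cyclicDist (n : ℕ) (x : ZMod n) : ℕ := min x.val (n - x.val)

/-- The circulant graph on `ZMod n` with distance set `S`: `x ~ y` iff `‖x - y‖ ∈ S`. -/
def circ (n : ℕ) (S : Set ℕ) : SimpleGraph (ZMod n) :=
  SimpleGraph.fromRel (fun x y => cyclicDist n (x - y) ∈ S)

/-- `G` is `R(s,t)`-good: no clique of size `s` and no independent set of size `t`. -/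
def RGood {V : Type*} (s t : ℕ) (G : SimpleGraph V) : Prop :=
  G.CliqueFree s ∧ Gᶜ.CliqueFree t

/-- `G` is doubly saturated `R(s,t)`-good. -/
def DoublySaturated {V : Type*} (s t : ℕ) (G : SimpleGraph V) : Prop :=
  RGood s t G ∧
  (∀ u v : V, u ≠ v → ¬ G.Adj u v → ¬ (G ⊔ SimpleGraph.edge u v).CliqueFree s) ∧
  (∀ u v : V, G.Adj u v → ¬ ((G.deleteEdges {s(u, v)})ᶜ.CliqueFree t)) ∧
  G ≠ ⊤ ∧ Gᶜ ≠ ⊤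

set_option linter.unreachableTactic false
set_option linter.unusedTactic false

open SimpleGraph

lemma cf3_iff' {V : Type*} (G : SimpleGraph V) :
    G.CliqueFree 3 ↔ ∀ a b c : V, ¬(G.Adj a b ∧ G.Adj a c ∧ G.Adj b c) := by
  classical
  constructor
  · rintro h a b c ⟨h1, h2, h3⟩
    exact h {a, b, c} (is3Clique_triple_iff.mpr ⟨h1, h2, h3⟩)
  · intro h t ht
    obtain ⟨a, b, c, h1, h2, h3, rfl⟩ := is3Clique_iff.mp ht
    exact h a b c ⟨h1, h2, h3⟩

lemma noIndep' {V : Type*} {G : SimpleGraph V} (h : Gᶜ.CliqueFree 3) :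
    ∀ a b c : V, a ≠ b → a ≠ c → b ≠ c →
      ¬G.Adj a b → ¬G.Adj a c → ¬G.Adj b c → False := by
  rw [cf3_iff'] at h
  intro a b c h1 h2 h3 h4 h5 h6
  exact h a b c ⟨⟨h1, h4⟩, ⟨h2, h5⟩, ⟨h3, h6⟩⟩

lemma card_le_five {V : Type*} [Fintype V] {G : SimpleGraph V}
    (hcf : G.CliqueFree 3) (hcfc : Gᶜ.CliqueFree 3) : Fintype.card V ≤ 5 := by
  classical
  rcases isEmpty_or_nonempty V with h | ⟨⟨v⟩⟩
  · simp [Fintype.card_eq_zero]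
  rw [cf3_iff'] at hcf
  have hni := noIndep' hcfc
  set S := Finset.univ.filter (fun x => G.Adj v x) with hSdef
  set T := Finset.univ.filter (fun x => x ≠ v ∧ ¬G.Adj v x) with hTdef
  have hS : S.card ≤ 2 := by
    by_contra h; push_neg at h
    obtain ⟨a, ha, b, hb, c, hc, hab, hac, hbc⟩ := Finset.two_lt_card.mp h
    simp only [hSdef, Finset.mem_filter, Finset.mem_univ, true_and] at ha hb hc
    refine hni a b c hab hac hbc ?_ ?_ ?_ <;> intro had
    · exact hcf v a b ⟨ha, hb, had⟩
    · exact hcf v a c ⟨ha, hc, had⟩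
    · exact hcf v b c ⟨hb, hc, had⟩
  have hT : T.card ≤ 2 := by
    by_contra h; push_neg at h
    obtain ⟨a, ha, b, hb, c, hc, hab, hac, hbc⟩ := Finset.two_lt_card.mp h
    simp only [hTdef, Finset.mem_filter, Finset.mem_univ, true_and] at ha hb hc
    have adj : ∀ x y : V, x ≠ y → (x ≠ v ∧ ¬G.Adj v x) → (y ≠ v ∧ ¬G.Adj v y) →
        G.Adj x y := by
      intro x y hxy hx hy
      by_contra hn
      exact hni v x y (Ne.symm hx.1) (Ne.symm hy.1) hxy hx.2 hy.2 hn
    exact hcf a b c ⟨adj a b hab ha hb, adj a c hac ha hc, adj b c hbc hb hc⟩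
  have hsub : Finset.univ ⊆ insert v (S ∪ T) := by
    intro x _
    by_cases h1 : x = v
    · simp [h1]
    by_cases h2 : G.Adj v x
    · simp [Finset.mem_insert, Finset.mem_union, hSdef, h2]
    · simp [Finset.mem_insert, Finset.mem_union, hTdef, h1, h2]
  calc Fintype.card V = Finset.univ.card := rfl
    _ ≤ (insert v (S ∪ T)).card := Finset.card_le_card hsub
    _ ≤ (S ∪ T).card + 1 := Finset.card_insert_le _ _
    _ ≤ (S.card + T.card) + 1 := by have := Finset.card_union_le S T; omega
    _ ≤ 5 := by omega

-- common neighbor from add-saturation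
lemma commonNbr {V : Type*} {G : SimpleGraph V} {u v : V}
    (htf : G.CliqueFree 3) (hne : u ≠ v)
    (h : ¬ (G ⊔ SimpleGraph.edge u v).CliqueFree 3) :
    ∃ w, G.Adj u w ∧ G.Adj v w := by
  rw [cf3_iff'] at h htf
  push_neg at h
  obtain ⟨a, b, c, hab, hac, hbc⟩ := h
  simp only [sup_adj, edge_adj] at hab hac hbc
  rcases hab with hab | ⟨hab, hab'⟩ <;> rcases hac with hac | ⟨hac, hac'⟩ <;>
    rcases hbc with hbc | ⟨hbc, hbc'⟩
  · exact absurd ⟨hab, hac, hbc⟩ (htf a b c)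
  · -- bc is the edge
    rcases hbc with ⟨rfl, rfl⟩ | ⟨rfl, rfl⟩
    · exact ⟨a, hab.symm, hac.symm⟩
    · exact ⟨a, hac.symm, hab.symm⟩
  · rcases hac with ⟨rfl, rfl⟩ | ⟨rfl, rfl⟩
    · exact ⟨b, hab, hbc.symm⟩
    · exact ⟨b, hbc.symm, hab⟩
  · rcases hac with ⟨rfl, rfl⟩ | ⟨rfl, rfl⟩ <;> rcases hbc with ⟨h1, h2⟩ | ⟨h1, h2⟩ <;>
      subst_vars <;> simp_all
  · rcases hab with ⟨rfl, rfl⟩ | ⟨rfl, rfl⟩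
    · exact ⟨c, hac, hbc⟩
    · exact ⟨c, hbc, hac⟩
  · rcases hab with ⟨rfl, rfl⟩ | ⟨rfl, rfl⟩ <;> rcases hbc with ⟨h1, h2⟩ | ⟨h1, h2⟩ <;>
      subst_vars <;> simp_all
  · rcases hab with ⟨rfl, rfl⟩ | ⟨rfl, rfl⟩ <;> rcases hac with ⟨h1, h2⟩ | ⟨h1, h2⟩ <;>
      subst_vars <;> simp_all
  · rcases hab with ⟨rfl, rfl⟩ | ⟨rfl, rfl⟩ <;> rcases hac with ⟨h1, h2⟩ | ⟨h1, h2⟩ <;>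
      subst_vars <;> simp_all

-- common non-neighbor from delete-saturation
lemma commonNonNbr {V : Type*} {G : SimpleGraph V} {u v : V}
    (hindep : Gᶜ.CliqueFree 3) (huv : G.Adj u v)
    (h : ¬ ((G.deleteEdges {s(u, v)})ᶜ.CliqueFree 3)) :
    ∃ z, z ≠ u ∧ z ≠ v ∧ ¬G.Adj z u ∧ ¬G.Adj z v := by
  have hni := noIndep' hindep
  rw [cf3_iff'] at h
  push_neg at h
  obtain ⟨a, b, c, hab, hac, hbc⟩ := h
  simp only [compl_adj, deleteEdges_adj, Set.mem_singleton_iff, not_and, not_not,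
    Sym2.eq, Sym2.rel_iff', Prod.mk.injEq, Prod.swap_prod_mk] at hab hac hbc
  obtain ⟨hab1, hab2⟩ := hab
  obtain ⟨hac1, hac2⟩ := hac
  obtain ⟨hbc1, hbc2⟩ := hbc
  have hne := huv.ne
  by_cases Hab : G.Adj a b <;> by_cases Hac : G.Adj a c <;> by_cases Hbc : G.Adj b c
  · exfalso; rcases hab2 Hab with ⟨rfl, rfl⟩ | ⟨rfl, rfl⟩ <;>
      rcases hac2 Hac with ⟨h1, h2⟩ | ⟨h1, h2⟩ <;> simp_all
  · exfalso; rcases hab2 Hab with ⟨rfl, rfl⟩ | ⟨rfl, rfl⟩ <;>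
      rcases hac2 Hac with ⟨h1, h2⟩ | ⟨h1, h2⟩ <;> simp_all
  · exfalso; rcases hab2 Hab with ⟨rfl, rfl⟩ | ⟨rfl, rfl⟩ <;>
      rcases hbc2 Hbc with ⟨h1, h2⟩ | ⟨h1, h2⟩ <;> simp_all
  · -- only ab adjacent; c is the common non-neighbor
    rcases hab2 Hab with ⟨rfl, rfl⟩ | ⟨rfl, rfl⟩
    all_goals refine ⟨c, ?_, ?_, ?_, ?_⟩ <;>
      first
        | exact Hab | exact Hac | exact Hbc
        | exact fun h' => Hab h'.symm | exact fun h' => Hac h'.symm | exact fun h' => Hbc h'.symm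
        | exact hab1 | exact hab1.symm | exact hac1 | exact hac1.symm | exact hbc1 | exact hbc1.symm
  · exfalso; rcases hac2 Hac with ⟨rfl, rfl⟩ | ⟨rfl, rfl⟩ <;>
      rcases hbc2 Hbc with ⟨h1, h2⟩ | ⟨h1, h2⟩ <;> simp_all
  · rcases hac2 Hac with ⟨rfl, rfl⟩ | ⟨rfl, rfl⟩
    all_goals refine ⟨b, ?_, ?_, ?_, ?_⟩ <;>
      first
        | exact Hab | exact Hac | exact Hbc
        | exact fun h' => Hab h'.symm | exact fun h' => Hac h'.symm | exact fun h' => Hbc h'.symm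
        | exact hab1 | exact hab1.symm | exact hac1 | exact hac1.symm | exact hbc1 | exact hbc1.symm
  · rcases hbc2 Hbc with ⟨rfl, rfl⟩ | ⟨rfl, rfl⟩
    all_goals refine ⟨a, ?_, ?_, ?_, ?_⟩ <;>
      first
        | exact Hab | exact Hac | exact Hbc
        | exact fun h' => Hab h'.symm | exact fun h' => Hac h'.symm | exact fun h' => Hbc h'.symm
        | exact hab1 | exact hab1.symm | exact hac1 | exact hac1.symm | exact hbc1 | exact hbc1.symm
  · exact (hni a b c hab1 hac1 hbc1 Hab Hac Hbc).elim


lemma unique_iso {V : Type} [Fintype V] (G : SimpleGraph V)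
    (h : DoublySaturated 3 3 G) : Nonempty (G ≃g cycleGraph 5) := by
  classical
  obtain ⟨⟨hcf, hcfc⟩, hadd, hdel, hnt, hntc⟩ := h
  have htf := (cf3_iff' G).mp hcf
  have hni := noIndep' hcfc
  have hex : ∃ u v : V, u ≠ v ∧ ¬G.Adj u v := by
    by_contra hc; push_neg at hc
    refine hnt ?_
    ext x y
    simp only [top_adj]
    exact ⟨fun h' => h'.ne, fun hxy => hc x y hxy⟩
  obtain ⟨u, v, huv, hnuv⟩ := hex
  obtain ⟨w, hw1, hw2⟩ := commonNbr hcf huv (hadd u v huv hnuv)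
  obtain ⟨z, hz1, hz2, hz3, hz4⟩ := commonNonNbr hcfc hw1.symm (hdel w u hw1.symm)
  have hzv : z ≠ v := fun h => (h ▸ hz3) hw2
  have hzadj : G.Adj z v := by
    by_contra hzz
    exact hni z u v hz2 hzv huv hz4 hzz hnuv
  obtain ⟨t, ht1, ht2⟩ := commonNbr hcf hz2 (hadd z u hz2 hz4)
  have htz : t ≠ z := ht1.ne'
  have htu : t ≠ u := ht2.ne'
  have htv : t ≠ v := fun h => hnuv (h ▸ ht2)
  have htw : t ≠ w := fun h => hz3 (h ▸ ht1)
  have hntw : ¬G.Adj t w := fun hh => htf u w t ⟨hw1, ht2, hh.symm⟩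
  have hntv : ¬G.Adj t v := fun hh => htf z t v ⟨ht1, hzadj, hh⟩
  -- the five vertices are pairwise distinct
  have d01 : u ≠ w := hw1.ne
  have d02 : u ≠ v := huv
  have d03 : u ≠ z := hz2.symm
  have d04 : u ≠ t := htu.symm
  have d12 : w ≠ v := hw2.ne'
  have d13 : w ≠ z := hz1.symm
  have d14 : w ≠ t := htw.symm
  have d23 : v ≠ z := hzv.symm
  have d24 : v ≠ t := htv.symm
  have d34 : z ≠ t := htz.symm
  have m1 : u ∉ ({w, v, z, t} : Finset V) := by simp [d01, d02, d03, d04]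
  have m2 : w ∉ ({v, z, t} : Finset V) := by simp [d12, d13, d14]
  have m3 : v ∉ ({z, t} : Finset V) := by simp [d23, d24]
  have m4 : z ∉ ({t} : Finset V) := by simp [d34]
  have hcard5 : ({u, w, v, z, t} : Finset V).card = 5 := by
    rw [Finset.card_insert_of_notMem m1, Finset.card_insert_of_notMem m2,
      Finset.card_insert_of_notMem m3, Finset.card_insert_of_notMem m4,
      Finset.card_singleton]
  have hcard : Fintype.card V = 5 := by
    have h1 := card_le_five hcf hcfc
    have h2 : 5 ≤ Fintype.card V := by
      rw [← hcard5]; exact Finset.card_le_univ _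
    omega
  set f : Fin 5 → V := ![u, w, v, z, t] with hf
  have hinj : Function.Injective f := by
    intro i j hij
    fin_cases i <;> fin_cases j <;>
      first
      | rfl
      | exact absurd hij d01 | exact absurd hij.symm d01
      | exact absurd hij d02 | exact absurd hij.symm d02
      | exact absurd hij d03 | exact absurd hij.symm d03
      | exact absurd hij d04 | exact absurd hij.symm d04
      | exact absurd hij d12 | exact absurd hij.symm d12
      | exact absurd hij d13 | exact absurd hij.symm d13
      | exact absurd hij d14 | exact absurd hij.symm d14
      | exact absurd hij d23 | exact absurd hij.symm d23
      | exact absurd hij d24 | exact absurd hij.symm d24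
      | exact absurd hij d34 | exact absurd hij.symm d34
  have hbij : Function.Bijective f :=
    (Fintype.bijective_iff_injective_and_card f).mpr ⟨hinj, by rw [Fintype.card_fin, hcard]⟩
  set e : Fin 5 ≃ V := Equiv.ofBijective f hbij with he
  have key : ∀ i j : Fin 5, G.Adj (e i) (e j) ↔ (cycleGraph 5).Adj i j := by
    intro i j
    fin_cases i <;> fin_cases j <;>
      first
      | exact iff_of_false G.irrefl (by decide)
      | exact iff_of_true hw1 (by decide)
      | exact iff_of_true hw1.symm (by decide)
      | exact iff_of_true hw2 (by decide)
      | exact iff_of_true hw2.symm (by decide)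
      | exact iff_of_true ht1 (by decide)
      | exact iff_of_true ht1.symm (by decide)
      | exact iff_of_true ht2 (by decide)
      | exact iff_of_true ht2.symm (by decide)
      | exact iff_of_true hzadj (by decide)
      | exact iff_of_true hzadj.symm (by decide)
      | exact iff_of_false hnuv (by decide)
      | exact iff_of_false (fun hh => hnuv hh.symm) (by decide)
      | exact iff_of_false hz3 (by decide)
      | exact iff_of_false (fun hh => hz3 hh.symm) (by decide)
      | exact iff_of_false hz4 (by decide)
      | exact iff_of_false (fun hh => hz4 hh.symm) (by decide)
      | exact iff_of_false hntw (by decide)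
      | exact iff_of_false (fun hh => hntw hh.symm) (by decide)
      | exact iff_of_false hntv (by decide)
      | exact iff_of_false (fun hh => hntv hh.symm) (by decide)
  exact ⟨(RelIso.mk e (fun {i j} => key i j)).symm⟩

theorem stmt_10 :
    DoublySaturated 3 3 (SimpleGraph.cycleGraph 5) ∧
    ∀ {V : Type} [Fintype V] (G : SimpleGraph V),
      DoublySaturated 3 3 G → Nonempty (G ≃g SimpleGraph.cycleGraph 5) := by
  constructor
  · refine ⟨⟨?_, ?_⟩, ?_, ?_, ?_, ?_⟩
    · rw [cf3_iff']; decide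
    · rw [cf3_iff']; decide
    · simp only [cf3_iff', sup_adj, edge_adj, cycleGraph_adj]; decide
    · simp only [cf3_iff', compl_adj, deleteEdges_adj, Set.mem_singleton_iff, Sym2.eq,
        Sym2.rel_iff', cycleGraph_adj, Prod.mk.injEq, Prod.swap_prod_mk]; decide
    · intro h
      have : (cycleGraph 5).Adj 0 2 := by rw [h]; decide
      revert this; decide
    · intro h
      have : ((cycleGraph 5)ᶜ).Adj 0 1 := by rw [h]; decide
      revert this; decide
  · intro V _ G h
    exact unique_iso G h
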